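/- For any integer t ≥ 2, with respect to the graded reverse lexicographic order on K[E_t] with a_1 > ⋯ > a_t > f_1 > f_2 > f_3 > e_1 > e_2 > e_3 > b_1 > ⋯ > b_t, the initial ideal of I_{G_t} is in(I_{G_t}) = ⟨ a_i b_j : 1 ≤ j < i ≤ t ⟩ + ⟨ a_i a_j f_1 f_3 e_2 : 1 ≤ i < j ≤ t ⟩ + ⟨ a_i² f_1 f_3 e_2 : 1 ≤ i ≤ t ⟩, and these t² monomials form a minimal generating set of in(I_{G_t}). -/

import Mathlib

open MvPolynomial

noncomputable section

namespace ToricPaper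

variable (K : Type) [Field K]

/-- The Hilbert function of `R/I`: dimension of the degree `j` part. -/
def hilb {σ : Type} (I : Ideal (MvPolynomial σ K)) (j : ℕ) : ℕ :=
  Module.finrank K (Submodule.map (Ideal.Quotient.mkₐ K I).toLinearMap
    (homogeneousSubmodule σ K j))

/-- The Hilbert series of `R/I` as a power series over `ℤ`. -/
def hilbertSeries {σ : Type} (I : Ideal (MvPolynomial σ K)) : PowerSeries ℤ :=
  PowerSeries.mk fun j => (hilb K I j : ℤ)

/-- `h` is the `h`-polynomial of `R/I`: `h(1) ≠ 0` and
`HS_{R/I}(x) = h(x)/(1-x)^{dim R/I}`. -/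
def IsHPolynomial {σ : Type} (I : Ideal (MvPolynomial σ K)) (h : Polynomial ℤ) : Prop :=
  Polynomial.eval 1 h ≠ 0 ∧
  ∃ d : ℕ, ringKrullDim (MvPolynomial σ K ⧸ I) = d ∧
    (h : PowerSeries ℤ) = hilbertSeries K I * (1 - PowerSeries.X) ^ d

/-- A homogeneous ideal: all homogeneous components of its elements belong to it. -/
def IsHomogeneousIdeal {σ : Type} (I : Ideal (MvPolynomial σ K)) : Prop :=
  ∀ f ∈ I, ∀ n : ℕ, homogeneousComponent n f ∈ I

/-- The module of `i`-chains of the Koszul complex of the variables with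
coefficients in `R/I`. -/
abbrev KChain {σ : Type} (I : Ideal (MvPolynomial σ K)) (i : ℕ) : Type :=
  {S : Finset σ // S.card = i} → (MvPolynomial σ K ⧸ I)

/-- The Koszul differential. -/
def kd {σ : Type} [Finite σ] (I : Ideal (MvPolynomial σ K)) (i : ℕ)
    (f : KChain K I i) : KChain K I (i - 1) :=
  letI := Fintype.ofFinite σ
  letI := Classical.decEq σ
  letI : LinearOrder σ := IsWellOrder.linearOrder WellOrderingRel
  fun T =>
    if hi : 1 ≤ i then
      ∑ x : σ,
        if hx : x ∈ T.1 then 0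
        else ((-1 : ℤ) ^ (T.1.filter (fun y => y < x)).card) •
          (Ideal.Quotient.mk I (X x) *
            f ⟨insert x T.1, by rw [Finset.card_insert_of_notMem hx, T.2]; omega⟩)
    else 0

/-- The internal degree `j` part of the `i`-chains of the Koszul complex:
each Koszul basis element `e_S`, `|S| = i`, has degree `i`, so coefficients
lie in the degree `j - i` part of `R/I`. -/
def degPart {σ : Type} (I : Ideal (MvPolynomial σ K)) (i j : ℕ) :
    Set (KChain K I i) :=
  {f | (∀ T, f T ∈ Submodule.map (Ideal.Quotient.mkₐ K I).toLinearMap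
          (homogeneousSubmodule σ K (j - i))) ∧ (i ≤ j ∨ f = 0)}

/-- Degree `j` Koszul cycles in homological degree `i`. -/
def cyclesSet {σ : Type} [Finite σ] (I : Ideal (MvPolynomial σ K)) (i j : ℕ) :
    Set (KChain K I i) :=
  degPart K I i j ∩ {f | kd K I i f = 0}

/-- Degree `j` Koszul boundaries in homological degree `i`. -/
def boundariesSet {σ : Type} [Finite σ] (I : Ideal (MvPolynomial σ K)) (i j : ℕ) :
    Set (KChain K I i) :=
  kd K I (i + 1) '' (degPart K I (i + 1) j)

/-- The graded Betti numbers `β_{i,j}(R/I) = dim_K Tor_i(R/I, K)_j`, computed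
as the dimension of the degree `j` part of the `i`-th homology of the Koszul
complex of the variables with coefficients in `R/I`. -/
def betti {σ : Type} [Finite σ] (I : Ideal (MvPolynomial σ K)) (i j : ℕ) : ℕ :=
  Module.finrank K
    ((Submodule.span K (cyclesSet K I i j)) ⧸
      (Submodule.comap (Submodule.span K (cyclesSet K I i j)).subtype
        (Submodule.span K (boundariesSet K I i j))))

/-- Castelnuovo-Mumford regularity: `max { j - i | β_{i,j}(R/I) ≠ 0 }`. -/
def regularity {σ : Type} [Finite σ] (I : Ideal (MvPolynomial σ K)) : ℕ :=
  sSup {r | ∃ i j, betti K I i j ≠ 0 ∧ j = i + r}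

/-- Projective dimension: `max { i | β_{i,j}(R/I) ≠ 0 for some j }`. -/
def pdim {σ : Type} [Finite σ] (I : Ideal (MvPolynomial σ K)) : ℕ :=
  sSup {p | ∃ j, betti K I p j ≠ 0}

/-- `β_{a,b}(R/I)` is an extremal graded Betti number. -/
def IsExtremalBetti {σ : Type} [Finite σ] (I : Ideal (MvPolynomial σ K))
    (a b : ℕ) : Prop :=
  betti K I a b ≠ 0 ∧
  ∀ i j : ℕ, a ≤ i → b < j → ((b : ℤ) - a ≤ (j : ℤ) - i) → betti K I i j = 0

/-- The depth of `R/I`: the maximal length of a regular sequence on `R/I`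
consisting of elements of the irrelevant maximal ideal `⟨x_1, …, x_n⟩`. -/
def depth {σ : Type} (I : Ideal (MvPolynomial σ K)) : ℕ :=
  sSup {n | ∃ rs : List (MvPolynomial σ K), rs.length = n ∧
    (∀ x ∈ rs, x ∈ Ideal.span (Set.range (X : σ → MvPolynomial σ K))) ∧
    RingTheory.Sequence.IsRegular (MvPolynomial σ K ⧸ I) rs}

/-- The initial ideal of `I` with respect to a monomial order: the ideal
generated by the leading monomials of the nonzero elements of `I`. -/
def initialIdeal {σ : Type} (m : MonomialOrder σ) (I : Ideal (MvPolynomial σ K)) :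
    Ideal (MvPolynomial σ K) :=
  Ideal.span {g | ∃ f ∈ I, f ≠ 0 ∧ ∃ u ∈ f.support,
    (∀ v ∈ f.support, m.toSyn v ≤ m.toSyn u) ∧ g = monomial u 1}

/-- The toric ideal of a finite simple graph `G`: the kernel of the map
`K[E] → K[V]` sending the variable of an edge `{u,v}` to `uv`. -/
def toricIdeal {V : Type} (G : SimpleGraph V) : Ideal (MvPolynomial G.edgeSet K) :=
  RingHom.ker (MvPolynomial.aeval (R := K)
    (fun e : G.edgeSet =>
      Sym2.lift ⟨fun u v => (X u : MvPolynomial V K) * X v,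
        fun _ _ => mul_comm _ _⟩ (e : Sym2 V))).toRingHom



/-! ### The graph `G_t` and its edge ring -/

/-- Edge variables of the graph `G_t`:
`a i = {x₁, y i}`, `f j` the triangle at `x₂`, `e j` the triangle at `x₁`,
`b i = {x₂, y i}`. -/
abbrev EVar (t : ℕ) : Type := (Fin t ⊕ Fin 3) ⊕ (Fin 3 ⊕ Fin t)

/-- The edge `a i = {x₁, y i}` of `G_t`. -/
def EVar.a {t : ℕ} (i : Fin t) : EVar t := Sum.inl (Sum.inl i)
/-- The edges `f 0 = f₁ = {x₂,w₁}`, `f 1 = f₂ = {w₁,w₂}`, `f 2 = f₃ = {w₂,x₂}`. -/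
def EVar.f {t : ℕ} (j : Fin 3) : EVar t := Sum.inl (Sum.inr j)
/-- The edges `e 0 = e₁ = {x₁,z₁}`, `e 1 = e₂ = {z₁,z₂}`, `e 2 = e₃ = {z₂,x₁}`. -/
def EVar.e {t : ℕ} (j : Fin 3) : EVar t := Sum.inr (Sum.inl j)
/-- The edge `b i = {x₂, y i}` of `G_t`. -/
def EVar.b {t : ℕ} (i : Fin t) : EVar t := Sum.inr (Sum.inr i)

/-- Vertices of `G_t`: `inl 0 = x₁`, `inl 1 = x₂`, `inl 2 = z₁`, `inl 3 = z₂`,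
`inl 4 = w₁`, `inl 5 = w₂`, and `inr i = y i`. -/
abbrev GtVertex (t : ℕ) : Type := Fin 6 ⊕ Fin t

/-- The map sending each edge variable of `G_t` to the product of the
variables of its two endpoints. -/
def gtMap (t : ℕ) : EVar t → MvPolynomial (GtVertex t) K
  | Sum.inl (Sum.inl i) => X (Sum.inl 0) * X (Sum.inr i)
  | Sum.inl (Sum.inr j) =>
      ![X (Sum.inl 1) * X (Sum.inl 4), X (Sum.inl 4) * X (Sum.inl 5),
        X (Sum.inl 5) * X (Sum.inl 1)] j
  | Sum.inr (Sum.inl j) =>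
      ![X (Sum.inl 0) * X (Sum.inl 2), X (Sum.inl 2) * X (Sum.inl 3),
        X (Sum.inl 3) * X (Sum.inl 0)] j
  | Sum.inr (Sum.inr i) => X (Sum.inl 1) * X (Sum.inr i)

/-- The toric ideal `I_{G_t} ⊆ K[E_t]`. -/
def toricGt (t : ℕ) : Ideal (MvPolynomial (EVar t) K) :=
  RingHom.ker (MvPolynomial.aeval (R := K) (gtMap K t)).toRingHom

/-- The rank of a variable in the order
`a₁ > ⋯ > a_t > f₁ > f₂ > f₃ > e₁ > e₂ > e₃ > b₁ > ⋯ > b_t`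
(smaller rank = larger variable). -/
def evarRank (t : ℕ) : EVar t → ℕ
  | Sum.inl (Sum.inl i) => (i : ℕ)
  | Sum.inl (Sum.inr j) => t + (j : ℕ)
  | Sum.inr (Sum.inl j) => t + 3 + (j : ℕ)
  | Sum.inr (Sum.inr i) => t + 6 + (i : ℕ)

/-- The graded reverse lexicographic comparison of exponent vectors for the
variable order `a₁ > ⋯ > a_t > f₁ > f₂ > f₃ > e₁ > e₂ > e₃ > b₁ > ⋯ > b_t`:
`u ≤ v` iff `deg u < deg v`, or the degrees agree and either `u = v` or
`u x > v x` at the smallest variable `x` (i.e. largest rank) where `u` and `v`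
differ. -/
def grevlexLe (t : ℕ) (u v : EVar t →₀ ℕ) : Prop :=
  (u.sum fun _ n => n) < (v.sum fun _ n => n) ∨
  ((u.sum fun _ n => n) = (v.sum fun _ n => n) ∧
    (u = v ∨ ∃ x, v x < u x ∧ ∀ y, evarRank t x < evarRank t y → u y = v y))

/-- `m` is the graded reverse lexicographic monomial order with
`a₁ > ⋯ > a_t > f₁ > f₂ > f₃ > e₁ > e₂ > e₃ > b₁ > ⋯ > b_t`. -/
def IsGrevlex (t : ℕ) (m : MonomialOrder (EVar t)) : Prop :=
  ∀ u v : EVar t →₀ ℕ, (m.toSyn u ≤ m.toSyn v) ↔ grevlexLe t u v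

/-- The binomials `a_i b_j - a_j b_i`, `1 ≤ i < j ≤ t`. -/
def G1Set (t : ℕ) : Set (MvPolynomial (EVar t) K) :=
  {g | ∃ i j : Fin t, i < j ∧
    g = X (EVar.a i) * X (EVar.b j) - X (EVar.a j) * X (EVar.b i)}

/-- The binomials `a_i a_j f₁ f₃ e₂ - f₂ e₁ e₃ b_i b_j`, `1 ≤ i < j ≤ t`. -/
def G2Set (t : ℕ) : Set (MvPolynomial (EVar t) K) :=
  {g | ∃ i j : Fin t, i < j ∧
    g = X (EVar.a i) * X (EVar.a j) * X (EVar.f 0) * X (EVar.f 2) * X (EVar.e 1)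
      - X (EVar.f 1) * X (EVar.e 0) * X (EVar.e 2) * X (EVar.b i) * X (EVar.b j)}

/-- The binomials `a_i² f₁ f₃ e₂ - f₂ e₁ e₃ b_i²`, `1 ≤ i ≤ t`. -/
def G3Set (t : ℕ) : Set (MvPolynomial (EVar t) K) :=
  {g | ∃ i : Fin t,
    g = X (EVar.a i) ^ 2 * X (EVar.f 0) * X (EVar.f 2) * X (EVar.e 1)
      - X (EVar.f 1) * X (EVar.e 0) * X (EVar.e 2) * X (EVar.b i) ^ 2}

/-- The monomials `a_i b_j`, `1 ≤ j < i ≤ t`. -/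
def M1Set (t : ℕ) : Set (MvPolynomial (EVar t) K) :=
  {g | ∃ i j : Fin t, j < i ∧ g = X (EVar.a i) * X (EVar.b j)}

/-- The monomials `a_i a_j f₁ f₃ e₂`, `1 ≤ i < j ≤ t`. -/
def M2Set (t : ℕ) : Set (MvPolynomial (EVar t) K) :=
  {g | ∃ i j : Fin t, i < j ∧
    g = X (EVar.a i) * X (EVar.a j) * X (EVar.f 0) * X (EVar.f 2) * X (EVar.e 1)}

/-- The monomials `a_i² f₁ f₃ e₂`, `1 ≤ i ≤ t`. -/
def M3Set (t : ℕ) : Set (MvPolynomial (EVar t) K) :=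
  {g | ∃ i : Fin t,
    g = X (EVar.a i) ^ 2 * X (EVar.f 0) * X (EVar.f 2) * X (EVar.e 1)}
/-! ### Auxiliary development -/

section Aux

open Finsupp

/-- Vertex-degree vector of a single edge. -/
def vmap {t : ℕ} : EVar t → (GtVertex t →₀ ℕ)
  | Sum.inl (Sum.inl i) => single (Sum.inl 0) 1 + single (Sum.inr i) 1
  | Sum.inl (Sum.inr j) =>
      ![single (Sum.inl 1) 1 + single (Sum.inl 4) 1,
        single (Sum.inl 4) 1 + single (Sum.inl 5) 1,
        single (Sum.inl 5) 1 + single (Sum.inl 1) 1] j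
  | Sum.inr (Sum.inl j) =>
      ![single (Sum.inl 0) 1 + single (Sum.inl 2) 1,
        single (Sum.inl 2) 1 + single (Sum.inl 3) 1,
        single (Sum.inl 3) 1 + single (Sum.inl 0) 1] j
  | Sum.inr (Sum.inr i) => single (Sum.inl 1) 1 + single (Sum.inr i) 1

lemma X_mul_X {σ : Type} (p q : σ) :
    (X p * X q : MvPolynomial σ K) = monomial (single p 1 + single q 1) 1 := by
  rw [X, X, monomial_mul, one_mul]

lemma gtMap_eq (t : ℕ) (v : EVar t) :
    gtMap K t v = monomial (vmap v) 1 := by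
  rcases v with (i | j) | (j | i)
  · exact X_mul_X K _ _
  · fin_cases j <;> exact X_mul_X K _ _
  · fin_cases j <;> exact X_mul_X K _ _
  · exact X_mul_X K _ _

/-- Vertex-degree vector of an exponent vector. -/
def vdeg {t : ℕ} (u : EVar t →₀ ℕ) : GtVertex t →₀ ℕ :=
  u.sum fun e n => n • vmap e

lemma aeval_gt (t : ℕ) (u : EVar t →₀ ℕ) (c : K) :
    MvPolynomial.aeval (gtMap K t) (monomial u c) = monomial (vdeg u) c := by
  rw [aeval_monomial, vdeg, monomial_finsupp_sum_index, algebraMap_eq]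
  refine congrArg _ (Finsupp.prod_congr fun e _ => ?_)
  rw [gtMap_eq, monomial_pow, one_pow]

lemma exists_partner {t : ℕ} {f : MvPolynomial (EVar t) K} (hf : f ∈ toricGt K t)
    {u : EVar t →₀ ℕ} (hu : u ∈ f.support) :
    ∃ w ∈ f.support, w ≠ u ∧ vdeg w = vdeg u := by
  classical
  by_contra hcon
  push_neg at hcon
  have h0 : (MvPolynomial.aeval (gtMap K t)) f = 0 := hf
  rw [f.as_sum, map_sum] at h0
  have h0' := congrArg (MvPolynomial.coeff (vdeg u)) h0
  rw [MvPolynomial.coeff_sum] at h0'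
  simp only [aeval_gt, MvPolynomial.coeff_monomial, MvPolynomial.coeff_zero] at h0'
  rw [Finset.sum_eq_single u] at h0'
  · rw [if_pos rfl] at h0'
    exact (MvPolynomial.mem_support_iff.mp hu) h0'
  · intro w hw hwne
    rw [if_neg (hcon w hw hwne)]
  · intro h; exact absurd hu h

lemma sum_evar {t : ℕ} (g : EVar t → ℕ) :
    ∑ x : EVar t, g x =
      ((∑ i : Fin t, g (EVar.a i)) + (g (EVar.f 0) + g (EVar.f 1) + g (EVar.f 2)))
      + ((g (EVar.e 0) + g (EVar.e 1) + g (EVar.e 2)) + ∑ i : Fin t, g (EVar.b i)) := by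
  rw [Fintype.sum_sum_type, Fintype.sum_sum_type, Fintype.sum_sum_type,
    Fin.sum_univ_three, Fin.sum_univ_three]
  rfl

lemma vdeg_apply {t : ℕ} (u : EVar t →₀ ℕ) (p : GtVertex t) :
    vdeg u p = ∑ x : EVar t, u x * vmap x p := by
  classical
  rw [vdeg, Finsupp.sum_apply]
  rw [Finsupp.sum_fintype]
  · exact Finset.sum_congr rfl fun x _ => by simp
  · intro x; simp

lemma finsupp_deg {t : ℕ} (u : EVar t →₀ ℕ) :
    (u.sum fun _ n => n) = ∑ x : EVar t, u x := by
  classical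
  rw [Finsupp.sum_fintype]
  intro x; rfl

variable {t : ℕ}

lemma vdeg_y (u : EVar t →₀ ℕ) (i : Fin t) :
    vdeg u (Sum.inr i) = u (EVar.a i) + u (EVar.b i) := by
  classical
  rw [vdeg_apply, sum_evar (fun x => u x * vmap x (Sum.inr i))]
  simp [vmap, EVar.a, EVar.b, EVar.e, EVar.f, Finsupp.single_apply,
    mul_ite, Finset.sum_ite_eq']

lemma vdeg_x1 (u : EVar t →₀ ℕ) :
    vdeg u (Sum.inl 0) = (∑ i : Fin t, u (EVar.a i)) + u (EVar.e 0) + u (EVar.e 2) := by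
  classical
  rw [vdeg_apply, sum_evar (fun x => u x * vmap x (Sum.inl 0))]
  simp [vmap, EVar.a, EVar.b, EVar.e, EVar.f, Finsupp.single_apply]
  ring

lemma vdeg_x2 (u : EVar t →₀ ℕ) :
    vdeg u (Sum.inl 1) = (∑ i : Fin t, u (EVar.b i)) + u (EVar.f 0) + u (EVar.f 2) := by
  classical
  rw [vdeg_apply, sum_evar (fun x => u x * vmap x (Sum.inl 1))]
  simp [vmap, EVar.a, EVar.b, EVar.e, EVar.f, Finsupp.single_apply]
  ring

lemma vdeg_z1 (u : EVar t →₀ ℕ) :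
    vdeg u (Sum.inl 2) = u (EVar.e 0) + u (EVar.e 1) := by
  classical
  rw [vdeg_apply, sum_evar (fun x => u x * vmap x (Sum.inl 2))]
  simp [vmap, EVar.a, EVar.b, EVar.e, EVar.f, Finsupp.single_apply]

lemma vdeg_z2 (u : EVar t →₀ ℕ) :
    vdeg u (Sum.inl 3) = u (EVar.e 1) + u (EVar.e 2) := by
  classical
  rw [vdeg_apply, sum_evar (fun x => u x * vmap x (Sum.inl 3))]
  simp [vmap, EVar.a, EVar.b, EVar.e, EVar.f, Finsupp.single_apply]

lemma vdeg_w1 (u : EVar t →₀ ℕ) :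
    vdeg u (Sum.inl 4) = u (EVar.f 0) + u (EVar.f 1) := by
  classical
  rw [vdeg_apply, sum_evar (fun x => u x * vmap x (Sum.inl 4))]
  simp [vmap, EVar.a, EVar.b, EVar.e, EVar.f, Finsupp.single_apply]

lemma vdeg_w2 (u : EVar t →₀ ℕ) :
    vdeg u (Sum.inl 5) = u (EVar.f 1) + u (EVar.f 2) := by
  classical
  rw [vdeg_apply, sum_evar (fun x => u x * vmap x (Sum.inl 5))]
  simp [vmap, EVar.a, EVar.b, EVar.e, EVar.f, Finsupp.single_apply]

/-- Exponent vector of `a_i b_j`. -/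
def u1 {t : ℕ} (i j : Fin t) : EVar t →₀ ℕ :=
  single (EVar.a i) 1 + single (EVar.b j) 1

/-- Exponent vector of `a_i a_j f₁ f₃ e₂`. -/
def u2 {t : ℕ} (i j : Fin t) : EVar t →₀ ℕ :=
  single (EVar.a i) 1 + single (EVar.a j) 1 + single (EVar.f 0) 1 +
    single (EVar.f 2) 1 + single (EVar.e 1) 1

/-- Exponent vector of `a_i² f₁ f₃ e₂`. -/
def u3 {t : ℕ} (i : Fin t) : EVar t →₀ ℕ :=
  single (EVar.a i) 2 + single (EVar.f 0) 1 + single (EVar.f 2) 1 +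
    single (EVar.e 1) 1

/-- The set of exponent vectors of the claimed minimal generators. -/
def USet (t : ℕ) : Set (EVar t →₀ ℕ) :=
  ({s | ∃ i j, j < i ∧ s = u1 i j} ∪ {s | ∃ i j, i < j ∧ s = u2 i j}) ∪
    {s | ∃ i, s = u3 i}

lemma u1_le {t : ℕ} {u : EVar t →₀ ℕ} {i j : Fin t}
    (h1 : 1 ≤ u (EVar.a i)) (h2 : 1 ≤ u (EVar.b j)) : u1 i j ≤ u := by
  rw [Finsupp.le_def]
  intro x
  simp only [u1, Finsupp.add_apply, Finsupp.single_apply]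
  split_ifs with ha hb hb
  · exact absurd (ha.trans hb.symm) (by simp [EVar.a, EVar.b])
  · simpa using ha ▸ h1
  · simpa using hb ▸ h2
  · simp

lemma u2_le {t : ℕ} {u : EVar t →₀ ℕ} {i j : Fin t} (hij : i ≠ j)
    (ha1 : 1 ≤ u (EVar.a i)) (ha2 : 1 ≤ u (EVar.a j)) (hf0 : 1 ≤ u (EVar.f 0))
    (hf2 : 1 ≤ u (EVar.f 2)) (he1 : 1 ≤ u (EVar.e 1)) : u2 i j ≤ u := by
  have ha1' : 1 ≤ u (Sum.inl (Sum.inl i)) := ha1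
  have ha2' : 1 ≤ u (Sum.inl (Sum.inl j)) := ha2
  rw [Finsupp.le_def]
  intro x
  rcases x with (k | k) | (k | k)
  · simp only [u2, Finsupp.add_apply, Finsupp.single_apply, EVar.a, EVar.b,
      EVar.e, EVar.f, Sum.inl.injEq, Sum.inr.injEq, reduceCtorEq, if_false,
      add_zero, zero_add]
    split_ifs with hc1 hc2 hc2
    · exact absurd (hc1.trans hc2.symm) hij
    · subst hc1; omega
    · subst hc2; omega
    · omega
  · fin_cases k
    · simpa [u2, Finsupp.single_apply, EVar.a, EVar.e, EVar.f] using hf0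
    · simp [u2, Finsupp.single_apply, EVar.a, EVar.e, EVar.f]
    · simpa [u2, Finsupp.single_apply, EVar.a, EVar.e, EVar.f] using hf2
  · fin_cases k
    · simp [u2, Finsupp.single_apply, EVar.a, EVar.e, EVar.f]
    · simpa [u2, Finsupp.single_apply, EVar.a, EVar.e, EVar.f] using he1
    · simp [u2, Finsupp.single_apply, EVar.a, EVar.e, EVar.f]
  · simp [u2, Finsupp.single_apply, EVar.a, EVar.b, EVar.e, EVar.f]

lemma u3_le {t : ℕ} {u : EVar t →₀ ℕ} {i : Fin t}
    (ha : 2 ≤ u (EVar.a i)) (hf0 : 1 ≤ u (EVar.f 0))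
    (hf2 : 1 ≤ u (EVar.f 2)) (he1 : 1 ≤ u (EVar.e 1)) : u3 i ≤ u := by
  have ha' : 2 ≤ u (Sum.inl (Sum.inl i)) := ha
  rw [Finsupp.le_def]
  intro x
  rcases x with (k | k) | (k | k)
  · simp only [u3, Finsupp.add_apply, Finsupp.single_apply, EVar.a, EVar.b,
      EVar.e, EVar.f, Sum.inl.injEq, Sum.inr.injEq, reduceCtorEq, if_false,
      add_zero, zero_add]
    split_ifs with hc1
    · subst hc1; omega
    · omega
  · fin_cases k
    · simpa [u3, Finsupp.single_apply, EVar.a, EVar.e, EVar.f] using hf0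
    · simp [u3, Finsupp.single_apply, EVar.a, EVar.e, EVar.f]
    · simpa [u3, Finsupp.single_apply, EVar.a, EVar.e, EVar.f] using hf2
  · fin_cases k
    · simp [u3, Finsupp.single_apply, EVar.a, EVar.e, EVar.f]
    · simpa [u3, Finsupp.single_apply, EVar.a, EVar.e, EVar.f] using he1
    · simp [u3, Finsupp.single_apply, EVar.a, EVar.e, EVar.f]
  · simp [u3, Finsupp.single_apply, EVar.a, EVar.b, EVar.e, EVar.f]

lemma two_of_sum {t : ℕ} {g : Fin t → ℕ} (h : 2 ≤ ∑ i, g i) :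
    (∃ i, 2 ≤ g i) ∨ ∃ i j, i < j ∧ 1 ≤ g i ∧ 1 ≤ g j := by
  classical
  have h1 : ∃ i, 1 ≤ g i := by
    by_contra h0
    push_neg at h0
    have : ∑ i, g i = 0 := Finset.sum_eq_zero fun i _ => by have := h0 i; omega
    omega
  obtain ⟨i, hi⟩ := h1
  by_cases h2i : 2 ≤ g i
  · exact Or.inl ⟨i, h2i⟩
  · have hsplit := Finset.add_sum_erase Finset.univ g (Finset.mem_univ i)
    have h2 : ∃ j ∈ Finset.univ.erase i, 1 ≤ g j := by
      by_contra hc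
      push_neg at hc
      have : ∑ k ∈ Finset.univ.erase i, g k = 0 :=
        Finset.sum_eq_zero fun k hk => by have := hc k hk; omega
      omega
    obtain ⟨j, hj, hj1⟩ := h2
    rcases lt_or_gt_of_ne (Finset.ne_of_mem_erase hj) with hlt | hgt
    · exact Or.inr ⟨j, i, hlt, hj1, hi⟩
    · exact Or.inr ⟨i, j, hgt, hi, hj1⟩

lemma key {t : ℕ} {u w : EVar t →₀ ℕ} (hne : w ≠ u) (hvd : vdeg w = vdeg u)
    (hle : grevlexLe t w u) : ∃ s ∈ USet t, s ≤ u := by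
  classical
  have hy : ∀ i, w (EVar.a i) + w (EVar.b i) = u (EVar.a i) + u (EVar.b i) := fun i => by
    have h := DFunLike.congr_fun hvd (Sum.inr i : GtVertex t)
    rwa [vdeg_y, vdeg_y] at h
  have hx1 : (∑ i, w (EVar.a i)) + w (EVar.e 0) + w (EVar.e 2)
      = (∑ i, u (EVar.a i)) + u (EVar.e 0) + u (EVar.e 2) := by
    have h := DFunLike.congr_fun hvd (Sum.inl 0 : GtVertex t)
    rwa [vdeg_x1, vdeg_x1] at h
  have hx2 : (∑ i, w (EVar.b i)) + w (EVar.f 0) + w (EVar.f 2)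
      = (∑ i, u (EVar.b i)) + u (EVar.f 0) + u (EVar.f 2) := by
    have h := DFunLike.congr_fun hvd (Sum.inl 1 : GtVertex t)
    rwa [vdeg_x2, vdeg_x2] at h
  have hz1 : w (EVar.e 0) + w (EVar.e 1) = u (EVar.e 0) + u (EVar.e 1) := by
    have h := DFunLike.congr_fun hvd (Sum.inl 2 : GtVertex t)
    rwa [vdeg_z1, vdeg_z1] at h
  have hz2 : w (EVar.e 1) + w (EVar.e 2) = u (EVar.e 1) + u (EVar.e 2) := by
    have h := DFunLike.congr_fun hvd (Sum.inl 3 : GtVertex t)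
    rwa [vdeg_z2, vdeg_z2] at h
  have hw1 : w (EVar.f 0) + w (EVar.f 1) = u (EVar.f 0) + u (EVar.f 1) := by
    have h := DFunLike.congr_fun hvd (Sum.inl 4 : GtVertex t)
    rwa [vdeg_w1, vdeg_w1] at h
  have hw2 : w (EVar.f 1) + w (EVar.f 2) = u (EVar.f 1) + u (EVar.f 2) := by
    have h := DFunLike.congr_fun hvd (Sum.inl 5 : GtVertex t)
    rwa [vdeg_w2, vdeg_w2] at h
  have hysum : (∑ i, w (EVar.a i)) + (∑ i, w (EVar.b i))
      = (∑ i, u (EVar.a i)) + (∑ i, u (EVar.b i)) := by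
    have h : ∑ i : Fin t, (w (EVar.a i) + w (EVar.b i))
        = ∑ i : Fin t, (u (EVar.a i) + u (EVar.b i)) :=
      Finset.sum_congr rfl fun i _ => hy i
    rwa [Finset.sum_add_distrib, Finset.sum_add_distrib] at h
  rcases hle with hlt | ⟨hdeq, heq | ⟨x, hxlt, hxy⟩⟩
  · exfalso
    have hdeg : (w.sum fun _ n => n) = (u.sum fun _ n => n) := by
      rw [finsupp_deg, finsupp_deg, sum_evar (fun x => w x), sum_evar (fun x => u x)]
      omega
    omega
  · exact absurd heq hne
  · rcases x with (i | k) | (k | i)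
    · exfalso
      have hb := hxy (EVar.b i) (by simp only [evarRank, EVar.a, EVar.b]; omega)
      have hx' : u (EVar.a i) < w (EVar.a i) := hxlt
      have hb' : w (EVar.b i) = u (EVar.b i) := hb
      have := hy i
      omega
    · exfalso
      fin_cases k
      · have h1 := hxy (EVar.f 1) (by simp [evarRank, EVar.f])
        have hx' : u (EVar.f 0) < w (EVar.f 0) := hxlt
        have h1' : w (EVar.f 1) = u (EVar.f 1) := h1
        omega
      · have h2 := hxy (EVar.f 2) (by simp [evarRank, EVar.f])
        have hx' : u (EVar.f 1) < w (EVar.f 1) := hxlt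
        have h2' : w (EVar.f 2) = u (EVar.f 2) := h2
        omega
      · have hball : ∀ k : Fin t, w (EVar.b k) = u (EVar.b k) := fun k =>
          hxy (EVar.b k) (by simp [evarRank, EVar.f, EVar.b]; omega)
        have hbsum : (∑ i, w (EVar.b i)) = ∑ i, u (EVar.b i) :=
          Finset.sum_congr rfl fun i _ => hball i
        have hx' : u (EVar.f 2) < w (EVar.f 2) := hxlt
        omega
    · exfalso
      fin_cases k
      · have h1 := hxy (EVar.e 1) (by simp [evarRank, EVar.e])
        have hx' : u (EVar.e 0) < w (EVar.e 0) := hxlt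
        have h1' : w (EVar.e 1) = u (EVar.e 1) := h1
        omega
      · have h2 := hxy (EVar.e 2) (by simp [evarRank, EVar.e])
        have hx' : u (EVar.e 1) < w (EVar.e 1) := hxlt
        have h2' : w (EVar.e 2) = u (EVar.e 2) := h2
        omega
      · have hball : ∀ k : Fin t, w (EVar.b k) = u (EVar.b k) := fun k =>
          hxy (EVar.b k) (by simp [evarRank, EVar.e, EVar.b]; omega)
        have hasum : (∑ i, w (EVar.a i)) = ∑ i, u (EVar.a i) :=
          Finset.sum_congr rfl fun i _ => by have := hy i; have := hball i; omega
        have hx' : u (EVar.e 2) < w (EVar.e 2) := hxlt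
        omega
    · -- main case : x = b i
      have hx' : u (EVar.b i) < w (EVar.b i) := hxlt
      have hbgt : ∀ k : Fin t, i < k → w (EVar.b k) = u (EVar.b k) := fun k hk =>
        hxy (EVar.b k) (by simp only [evarRank, EVar.b]; omega)
      by_cases hA : ∃ j, j < i ∧ w (EVar.b j) < u (EVar.b j)
      · obtain ⟨j, hji, hj⟩ := hA
        refine ⟨u1 i j, Or.inl (Or.inl ⟨i, j, hji, rfl⟩), u1_le ?_ ?_⟩
        · have := hy i; omega
        · omega
      · push_neg at hA
        have hBlt : (∑ k, u (EVar.b k)) < ∑ k, w (EVar.b k) := by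
          refine Finset.sum_lt_sum (fun k _ => ?_) ⟨i, Finset.mem_univ i, hx'⟩
          rcases lt_trichotomy k i with h | h | h
          · exact hA k h
          · subst h; exact hx'.le
          · exact (hbgt k h).ge
        have hmain : 2 ≤ (∑ k, u (EVar.a k)) ∧ 1 ≤ u (EVar.f 0) ∧
            1 ≤ u (EVar.f 2) ∧ 1 ≤ u (EVar.e 1) := by omega
        obtain ⟨h2A, hf0, hf2', he1⟩ := hmain
        rcases two_of_sum h2A with ⟨k, hk⟩ | ⟨k, l, hkl, hk, hl⟩
        · exact ⟨u3 k, Or.inr ⟨k, rfl⟩, u3_le hk hf0 hf2' he1⟩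
        · exact ⟨u2 k l, Or.inl (Or.inr ⟨k, l, hkl, rfl⟩),
            u2_le (ne_of_lt hkl) hk hl hf0 hf2' he1⟩

/-- Trailing exponent vector of the `G2` binomial. -/
def v2 {t : ℕ} (i j : Fin t) : EVar t →₀ ℕ :=
  single (EVar.f 1) 1 + single (EVar.e 0) 1 + single (EVar.e 2) 1 +
    single (EVar.b i) 1 + single (EVar.b j) 1

/-- Trailing exponent vector of the `G3` binomial. -/
def v3 {t : ℕ} (i : Fin t) : EVar t →₀ ℕ :=
  single (EVar.f 1) 1 + single (EVar.e 0) 1 + single (EVar.e 2) 1 +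
    single (EVar.b i) 2

lemma vdeg_add {t : ℕ} (x y : EVar t →₀ ℕ) : vdeg (x + y) = vdeg x + vdeg y :=
  Finsupp.sum_add_index' (fun _ => zero_smul _ _) (fun e m n => add_smul m n (vmap e))

lemma vdeg_single {t : ℕ} (e : EVar t) (n : ℕ) : vdeg (single e n) = n • vmap e :=
  Finsupp.sum_single_index (zero_smul _ _)

lemma vdeg_u1 {t : ℕ} (i j : Fin t) : vdeg (u1 i j) = vdeg (u1 j i) := by
  simp only [u1, vdeg_add, vdeg_single, one_smul, vmap, EVar.a, EVar.b]
  abel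

lemma vdeg_u2 {t : ℕ} (i j : Fin t) : vdeg (u2 i j) = vdeg (v2 i j) := by
  simp only [u2, v2, vdeg_add, vdeg_single, one_smul, vmap, EVar.a, EVar.b,
    EVar.e, EVar.f]
  simp only [Matrix.cons_val_zero, Matrix.cons_val_one, Matrix.head_cons,
    Matrix.cons_val_two, Matrix.tail_cons]
  abel

lemma vdeg_u3 {t : ℕ} (i : Fin t) : vdeg (u3 i) = vdeg (v3 i) := by
  simp only [u3, v3, vdeg_add, vdeg_single, one_smul, vmap, EVar.a, EVar.b,
    EVar.e, EVar.f]
  simp only [Matrix.cons_val_zero, Matrix.cons_val_one, Matrix.head_cons,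
    Matrix.cons_val_two, Matrix.tail_cons]
  rw [two_smul, two_smul]
  abel

/-- Degree of a sum / single. -/
lemma deg_add {t : ℕ} (x y : EVar t →₀ ℕ) :
    ((x + y).sum fun _ n => n) = (x.sum fun _ n => n) + (y.sum fun _ n => n) :=
  Finsupp.sum_add_index' (fun _ => rfl) (fun _ _ _ => rfl)

lemma deg_single {t : ℕ} (e : EVar t) (n : ℕ) :
    ((single e n : EVar t →₀ ℕ).sum fun _ n => n) = n :=
  Finsupp.sum_single_index rfl

lemma deg_u1 {t : ℕ} (i j : Fin t) : ((u1 i j).sum fun _ n => n) = 2 := by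
  simp [u1, deg_add, deg_single]

lemma deg_u2 {t : ℕ} (i j : Fin t) : ((u2 i j).sum fun _ n => n) = 5 := by
  simp [u2, deg_add, deg_single]

lemma deg_v2 {t : ℕ} (i j : Fin t) : ((v2 i j).sum fun _ n => n) = 5 := by
  simp [v2, deg_add, deg_single]

lemma deg_u3 {t : ℕ} (i : Fin t) : ((u3 i).sum fun _ n => n) = 5 := by
  simp [u3, deg_add, deg_single]

lemma deg_v3 {t : ℕ} (i : Fin t) : ((v3 i).sum fun _ n => n) = 5 := by
  simp [v3, deg_add, deg_single]

/-! value lemmas -/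

lemma u1_a {t : ℕ} (i j k : Fin t) : u1 i j (EVar.a k) = if i = k then 1 else 0 := by
  simp [u1, Finsupp.single_apply, EVar.a, EVar.b]

lemma u1_b {t : ℕ} (i j k : Fin t) : u1 i j (EVar.b k) = if j = k then 1 else 0 := by
  simp [u1, Finsupp.single_apply, EVar.a, EVar.b]

lemma u1_f {t : ℕ} (i j : Fin t) (k : Fin 3) : u1 i j (EVar.f k) = 0 := by
  simp [u1, Finsupp.single_apply, EVar.a, EVar.b, EVar.f]

lemma u1_e {t : ℕ} (i j : Fin t) (k : Fin 3) : u1 i j (EVar.e k) = 0 := by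
  simp [u1, Finsupp.single_apply, EVar.a, EVar.b, EVar.e]

lemma u2_a {t : ℕ} (i j k : Fin t) :
    u2 i j (EVar.a k) = (if i = k then 1 else 0) + (if j = k then 1 else 0) := by
  simp [u2, Finsupp.single_apply, EVar.a, EVar.e, EVar.f]

lemma u2_b {t : ℕ} (i j k : Fin t) : u2 i j (EVar.b k) = 0 := by
  simp [u2, Finsupp.single_apply, EVar.a, EVar.b, EVar.e, EVar.f]

lemma u2_f0 {t : ℕ} (i j : Fin t) : u2 i j (EVar.f 0) = 1 := by
  simp [u2, Finsupp.single_apply, EVar.a, EVar.e, EVar.f]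

lemma u2_f2 {t : ℕ} (i j : Fin t) : u2 i j (EVar.f 2) = 1 := by
  simp [u2, Finsupp.single_apply, EVar.a, EVar.e, EVar.f]

lemma u2_e1 {t : ℕ} (i j : Fin t) : u2 i j (EVar.e 1) = 1 := by
  simp [u2, Finsupp.single_apply, EVar.a, EVar.e, EVar.f]

lemma u3_a {t : ℕ} (i k : Fin t) : u3 i (EVar.a k) = if i = k then 2 else 0 := by
  simp [u3, Finsupp.single_apply, EVar.a, EVar.e, EVar.f]

lemma u3_b {t : ℕ} (i k : Fin t) : u3 i (EVar.b k) = 0 := by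
  simp [u3, Finsupp.single_apply, EVar.a, EVar.b, EVar.e, EVar.f]

lemma u3_f0 {t : ℕ} (i : Fin t) : u3 i (EVar.f 0) = 1 := by
  simp [u3, Finsupp.single_apply, EVar.a, EVar.e, EVar.f]

lemma u3_f2 {t : ℕ} (i : Fin t) : u3 i (EVar.f 2) = 1 := by
  simp [u3, Finsupp.single_apply, EVar.a, EVar.e, EVar.f]

lemma u3_e1 {t : ℕ} (i : Fin t) : u3 i (EVar.e 1) = 1 := by
  simp [u3, Finsupp.single_apply, EVar.a, EVar.e, EVar.f]

lemma v2_b {t : ℕ} (i j k : Fin t) :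
    v2 i j (EVar.b k) = (if i = k then 1 else 0) + (if j = k then 1 else 0) := by
  simp [v2, Finsupp.single_apply, EVar.b, EVar.e, EVar.f]

lemma v2_f0 {t : ℕ} (i j : Fin t) : v2 i j (EVar.f 0) = 0 := by
  simp [v2, Finsupp.single_apply, EVar.b, EVar.e, EVar.f]

lemma v3_b {t : ℕ} (i k : Fin t) : v3 i (EVar.b k) = if i = k then 2 else 0 := by
  simp [v3, Finsupp.single_apply, EVar.b, EVar.e, EVar.f]

lemma v3_f0 {t : ℕ} (i : Fin t) : v3 i (EVar.f 0) = 0 := by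
  simp [v3, Finsupp.single_apply, EVar.b, EVar.e, EVar.f]

/-! grevlex comparisons -/

lemma grev_rank_b {t : ℕ} {i : Fin t} {y : EVar t}
    (hy : evarRank t (EVar.b i) < evarRank t y) : ∃ k : Fin t, y = EVar.b k ∧ i < k := by
  rcases y with (k | k) | (k | k)
  · exfalso; have := k.isLt; simp only [evarRank, EVar.b] at hy; omega
  · exfalso; have := k.isLt; simp only [evarRank, EVar.b] at hy; omega
  · exfalso; have := k.isLt; simp only [evarRank, EVar.b] at hy; omega
  · refine ⟨k, rfl, ?_⟩
    simp only [evarRank, EVar.b] at hy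
    exact Fin.lt_def.mpr (by omega)

lemma grev_u1 {t : ℕ} {i j : Fin t} (hji : j < i) : grevlexLe t (u1 j i) (u1 i j) := by
  refine Or.inr ⟨by rw [deg_u1, deg_u1], Or.inr ⟨EVar.b i, ?_, ?_⟩⟩
  · rw [u1_b, u1_b, if_pos rfl, if_neg (ne_of_lt hji)]; omega
  · intro y hy
    obtain ⟨k, rfl, hik⟩ := grev_rank_b hy
    rw [u1_b, u1_b, if_neg (ne_of_lt hik), if_neg (ne_of_lt (hji.trans hik))]

lemma grev_u2 {t : ℕ} {i j : Fin t} (hij : i < j) : grevlexLe t (v2 i j) (u2 i j) := by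
  refine Or.inr ⟨by rw [deg_v2, deg_u2], Or.inr ⟨EVar.b j, ?_, ?_⟩⟩
  · rw [u2_b, v2_b, if_pos rfl, if_neg (ne_of_lt hij)]; omega
  · intro y hy
    obtain ⟨k, rfl, hjk⟩ := grev_rank_b hy
    rw [u2_b, v2_b, if_neg (ne_of_lt hjk), if_neg (ne_of_lt (hij.trans hjk))]

lemma grev_u3 {t : ℕ} {i : Fin t} : grevlexLe t (v3 i) (u3 i) := by
  refine Or.inr ⟨by rw [deg_v3, deg_u3], Or.inr ⟨EVar.b i, ?_, ?_⟩⟩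
  · rw [u3_b, v3_b, if_pos rfl]; omega
  · intro y hy
    obtain ⟨k, rfl, hik⟩ := grev_rank_b hy
    rw [u3_b, v3_b, if_neg (ne_of_lt hik)]

/-! the leading monomials belong to the initial ideal -/

lemma lead_mem {t : ℕ} (m : MonomialOrder (EVar t)) (hm : IsGrevlex t m)
    {u v : EVar t →₀ ℕ} (hvd : vdeg u = vdeg v) (huv : v ≠ u)
    (hles : grevlexLe t v u) :
    monomial u (1 : K) ∈ initialIdeal K m (toricGt K t) := by
  classical
  set F : MvPolynomial (EVar t) K := monomial u 1 - monomial v 1 with hF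
  have hcu : MvPolynomial.coeff u F = 1 := by
    simp [hF, MvPolynomial.coeff_monomial, if_neg huv]
  have hker : F ∈ toricGt K t := by
    have : (MvPolynomial.aeval (gtMap K t)) F = 0 := by
      rw [hF, map_sub, aeval_gt, aeval_gt, hvd, sub_self]
    exact this
  have hsupp : F.support ⊆ {u, v} := by
    refine subset_trans (MvPolynomial.support_sub _ _ _) ?_
    rw [MvPolynomial.support_monomial, MvPolynomial.support_monomial,
      if_neg (one_ne_zero (α := K)), if_neg (one_ne_zero (α := K))]
    intro z hz
    simpa using hz
  refine Ideal.subset_span ⟨F, hker, ?_, u, ?_, ?_, rfl⟩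
  · intro h
    rw [h] at hcu
    simp at hcu
  · exact MvPolynomial.mem_support_iff.mpr (by rw [hcu]; exact one_ne_zero)
  · intro z hz
    have := hsupp hz
    simp only [Finset.mem_insert, Finset.mem_singleton] at this
    rcases this with rfl | rfl
    · exact le_refl _
    · exact (hm z u).mpr hles

lemma Xmon {t : ℕ} (p : EVar t) : (X p : MvPolynomial (EVar t) K) = monomial (single p 1) 1 := rfl

lemma Xu1 {t : ℕ} (i j : Fin t) :
    (X (EVar.a i) * X (EVar.b j) : MvPolynomial (EVar t) K) = monomial (u1 i j) 1 := by
  simp [Xmon, monomial_mul, u1]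

lemma Xu2 {t : ℕ} (i j : Fin t) :
    (X (EVar.a i) * X (EVar.a j) * X (EVar.f 0) * X (EVar.f 2) * X (EVar.e 1) :
      MvPolynomial (EVar t) K) = monomial (u2 i j) 1 := by
  simp [Xmon, monomial_mul, u2]

lemma Xu3 {t : ℕ} (i : Fin t) :
    (X (EVar.a i) ^ 2 * X (EVar.f 0) * X (EVar.f 2) * X (EVar.e 1) :
      MvPolynomial (EVar t) K) = monomial (u3 i) 1 := by
  simp [Xmon, monomial_pow, monomial_mul, u3, Finsupp.smul_single, smul_eq_mul]

lemma u1_ne {t : ℕ} {i j : Fin t} (hji : j < i) : u1 j i ≠ u1 i j := by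
  intro h
  have h' := DFunLike.congr_fun h (EVar.b i)
  rw [u1_b, u1_b, if_pos rfl, if_neg (ne_of_lt hji)] at h'
  exact one_ne_zero h'

lemma v2_ne {t : ℕ} (i j : Fin t) : v2 i j ≠ u2 i j := by
  intro h
  have h' := DFunLike.congr_fun h (EVar.f 0)
  rw [v2_f0, u2_f0] at h'
  exact zero_ne_one h'

lemma v3_ne {t : ℕ} (i : Fin t) : v3 i ≠ u3 i := by
  intro h
  have h' := DFunLike.congr_fun h (EVar.f 0)
  rw [v3_f0, u3_f0] at h'
  exact zero_ne_one h'

lemma MUnion_eq (t : ℕ) :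
    M1Set K t ∪ M2Set K t ∪ M3Set K t = (fun s => monomial s (1 : K)) '' USet t := by
  ext g
  constructor
  · rintro ((⟨i, j, hji, rfl⟩ | ⟨i, j, hij, rfl⟩) | ⟨i, rfl⟩)
    · exact ⟨u1 i j, Or.inl (Or.inl ⟨i, j, hji, rfl⟩), (Xu1 K i j).symm⟩
    · exact ⟨u2 i j, Or.inl (Or.inr ⟨i, j, hij, rfl⟩), (Xu2 K i j).symm⟩
    · exact ⟨u3 i, Or.inr ⟨i, rfl⟩, (Xu3 K i).symm⟩
  · rintro ⟨s, (⟨i, j, hji, rfl⟩ | ⟨i, j, hij, rfl⟩) | ⟨i, rfl⟩, rfl⟩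
    · exact Or.inl (Or.inl ⟨i, j, hji, (Xu1 K i j).symm⟩)
    · exact Or.inl (Or.inr ⟨i, j, hij, (Xu2 K i j).symm⟩)
    · exact Or.inr ⟨i, (Xu3 K i).symm⟩

lemma initial_eq (t : ℕ) (m : MonomialOrder (EVar t)) (hm : IsGrevlex t m) :
    initialIdeal K m (toricGt K t) =
      Ideal.span (M1Set K t ∪ M2Set K t ∪ M3Set K t) := by
  rw [MUnion_eq]
  apply le_antisymm
  · rw [initialIdeal]
    apply Ideal.span_le.mpr
    rintro g ⟨F, hFI, hF0, u, huF, humax, rfl⟩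
    obtain ⟨w, hw, hwne, hwvd⟩ := exists_partner K hFI huF
    have hle : grevlexLe t w u := (hm w u).mp (humax w hw)
    obtain ⟨s, hs, hsle⟩ := key hwne hwvd hle
    rw [SetLike.mem_coe, mem_ideal_span_monomial_image]
    intro xi hxi
    have hxiu : xi = u := by
      classical
      rw [MvPolynomial.support_monomial, if_neg (one_ne_zero (α := K))] at hxi
      simpa using hxi
    subst hxiu
    exact ⟨s, hs, hsle⟩
  · apply Ideal.span_le.mpr
    rintro g ⟨s, (⟨i, j, hji, rfl⟩ | ⟨i, j, hij, rfl⟩) | ⟨i, rfl⟩, rfl⟩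
    · exact lead_mem K m hm (vdeg_u1 i j) (u1_ne hji) (grev_u1 hji)
    · exact lead_mem K m hm (vdeg_u2 i j) (v2_ne i j) (grev_u2 hij)
    · exact lead_mem K m hm (vdeg_u3 i) (v3_ne i) grev_u3

lemma ite_ge1 {P : Prop} [Decidable P] {n : ℕ} (hn : 1 ≤ n → P)
    (h : 1 ≤ (if P then n else 0)) : P := by
  by_cases hc : P
  · exact hc
  · simp [hc] at h

lemma no_divide {t : ℕ} {s s' : EVar t →₀ ℕ} (hs : s ∈ USet t) (hs' : s' ∈ USet t)
    (hle : s' ≤ s) : s' = s := by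
  have hle' : ∀ x, s' x ≤ s x := Finsupp.le_def.mp hle
  rcases hs with (⟨i, j, hji, rfl⟩ | ⟨i, j, hij, rfl⟩) | ⟨i, rfl⟩ <;>
    rcases hs' with (⟨i', j', hji', rfl⟩ | ⟨i', j', hij', rfl⟩) | ⟨i', rfl⟩
  · -- u1 ≤ u1
    have h1 := hle' (EVar.a i')
    rw [u1_a, u1_a, if_pos rfl] at h1
    have h2 := hle' (EVar.b j')
    rw [u1_b, u1_b, if_pos rfl] at h2
    have hii : i = i' := by by_contra hc; simp [hc] at h1
    have hjj : j = j' := by by_contra hc; simp [hc] at h2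
    rw [hii, hjj]
  · -- u2 ≤ u1 : impossible
    exfalso
    have h := hle' (EVar.f 0)
    rw [u2_f0, u1_f] at h
    omega
  · exfalso
    have h := hle' (EVar.f 0)
    rw [u3_f0, u1_f] at h
    omega
  · -- u1 ≤ u2 : impossible
    exfalso
    have h := hle' (EVar.b j')
    rw [u1_b, u2_b, if_pos rfl] at h
    omega
  · -- u2 ≤ u2
    have h1 := hle' (EVar.a i')
    rw [u2_a, u2_a, if_pos rfl] at h1
    have h2 := hle' (EVar.a j')
    rw [u2_a, u2_a, if_pos rfl] at h2
    have c1 : i = i' ∨ j = i' := by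
      by_contra hc; push_neg at hc; simp [hc.1, hc.2] at h1
    have c2 : i = j' ∨ j = j' := by
      by_contra hc; push_neg at hc
      rw [if_neg hc.1, if_neg hc.2] at h2
      simp at h2
    have c1' : (i : ℕ) = i' ∨ (j : ℕ) = i' := c1.imp (congrArg Fin.val) (congrArg Fin.val)
    have c2' : (i : ℕ) = j' ∨ (j : ℕ) = j' := c2.imp (congrArg Fin.val) (congrArg Fin.val)
    have hv1 := Fin.lt_def.mp hij
    have hv2 := Fin.lt_def.mp hij'
    have : (i : ℕ) = i' ∧ (j : ℕ) = j' := by omega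
    rw [Fin.ext_iff.mpr this.1, Fin.ext_iff.mpr this.2]
  · -- u3 ≤ u2 : impossible
    exfalso
    have h := hle' (EVar.a i')
    rw [u3_a, u2_a, if_pos rfl] at h
    by_cases h1 : i = i' <;> by_cases h2 : j = i'
    · exact absurd (h1.trans h2.symm) (ne_of_lt hij)
    · simp [h1, h2] at h
    · simp [h1, h2] at h
    · simp [h1, h2] at h
  · -- u1 ≤ u3 : impossible
    exfalso
    have h := hle' (EVar.b j')
    rw [u1_b, u3_b, if_pos rfl] at h
    omega
  · -- u2 ≤ u3 : impossible
    exfalso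
    have h1 := hle' (EVar.a i')
    rw [u2_a, u3_a, if_pos rfl] at h1
    have h2 := hle' (EVar.a j')
    rw [u2_a, u3_a, if_pos rfl] at h2
    have c1 : i = i' := by by_contra hc; simp [hc] at h1
    have c2 : i = j' := by by_contra hc; rw [if_neg hc] at h2; simp at h2
    exact absurd (c1.symm.trans c2) (ne_of_lt hij')
  · -- u3 ≤ u3
    have h := hle' (EVar.a i')
    rw [u3_a, u3_a, if_pos rfl] at h
    have c : i = i' := by by_contra hc; simp [hc] at h
    rw [c]

lemma monomial_one_injective (t : ℕ) :
    Function.Injective (fun s : EVar t →₀ ℕ => monomial s (1 : K)) :=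
  MvPolynomial.monomial_left_injective one_ne_zero

lemma minimal_gen (t : ℕ) :
    ∀ g ∈ M1Set K t ∪ M2Set K t ∪ M3Set K t,
      g ∉ Ideal.span ((M1Set K t ∪ M2Set K t ∪ M3Set K t) \ {g}) := by
  rw [MUnion_eq]
  rintro g ⟨s, hs, rfl⟩ hcon
  beta_reduce at hcon
  have himg : (((fun s : EVar t →₀ ℕ => monomial s (1 : K)) '' USet t) \ {monomial s (1 : K)}) = (fun s : EVar t →₀ ℕ => monomial s (1 : K)) '' (USet t \ {s}) := by
    rw [show ({monomial s (1 : K)} : Set (MvPolynomial (EVar t) K)) = (fun s : EVar t →₀ ℕ => monomial s (1 : K)) '' {s} from (Set.image_singleton (f := fun s : EVar t →₀ ℕ => monomial s (1 : K)) (a := s)).symm,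
      Set.image_diff (monomial_one_injective K t)]
  rw [himg, mem_ideal_span_monomial_image] at hcon
  have hss : s ∈ (monomial s (1 : K)).support := by
    classical
    rw [MvPolynomial.support_monomial, if_neg (one_ne_zero (α := K))]
    simp
  obtain ⟨s', hs', hle⟩ := hcon s hss
  exact hs'.2 (no_divide hs hs'.1 hle)

lemma u1_inj {t : ℕ} : Function.Injective (fun p : Fin t × Fin t => u1 p.1 p.2) := by
  intro p q h
  have h1 := DFunLike.congr_fun h (EVar.a q.1)
  rw [u1_a, u1_a, if_pos rfl] at h1
  have h2 := DFunLike.congr_fun h (EVar.b q.2)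
  rw [u1_b, u1_b, if_pos rfl] at h2
  have c1 : p.1 = q.1 := by by_contra hc; simp [hc] at h1
  have c2 : p.2 = q.2 := by by_contra hc; simp [hc] at h2
  exact Prod.ext c1 c2

lemma u2_injOn {t : ℕ} :
    Set.InjOn (fun p : Fin t × Fin t => u2 p.1 p.2) {p | p.1 < p.2} := by
  rintro ⟨a, b⟩ hp ⟨c, d⟩ hq h
  simp only [Set.mem_setOf_eq] at hp hq
  have h1 := DFunLike.congr_fun h (EVar.a c)
  rw [u2_a, u2_a, if_pos rfl, if_neg (ne_of_gt hq)] at h1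
  have h2 := DFunLike.congr_fun h (EVar.a d)
  rw [u2_a, u2_a, if_neg (ne_of_lt hq), if_pos rfl] at h2
  have c1 : a = c ∨ b = c := by
    by_contra hc; push_neg at hc; rw [if_neg hc.1, if_neg hc.2] at h1; simp at h1
  have c2 : a = d ∨ b = d := by
    by_contra hc; push_neg at hc; rw [if_neg hc.1, if_neg hc.2] at h2; simp at h2
  have c1' : (a : ℕ) = c ∨ (b : ℕ) = c := c1.imp (congrArg Fin.val) (congrArg Fin.val)
  have c2' : (a : ℕ) = d ∨ (b : ℕ) = d := c2.imp (congrArg Fin.val) (congrArg Fin.val)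
  have hv1 := Fin.lt_def.mp hp
  have hv2 := Fin.lt_def.mp hq
  have : (a : ℕ) = c ∧ (b : ℕ) = d := by omega
  rw [Prod.mk.injEq]
  exact ⟨Fin.ext this.1, Fin.ext this.2⟩

lemma u3_inj {t : ℕ} : Function.Injective (u3 (t := t)) := by
  intro i j h
  have h1 := DFunLike.congr_fun h (EVar.a j)
  rw [u3_a, u3_a, if_pos rfl] at h1
  by_contra hc
  simp [hc] at h1

lemma S1_eq (t : ℕ) : {s : EVar t →₀ ℕ | ∃ i j, j < i ∧ s = u1 i j}
    = (fun p : Fin t × Fin t => u1 p.1 p.2) '' {p | p.2 < p.1} := by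
  ext s
  constructor
  · rintro ⟨i, j, hji, rfl⟩; exact ⟨(i, j), hji, rfl⟩
  · rintro ⟨⟨i, j⟩, hp, rfl⟩; exact ⟨i, j, hp, rfl⟩

lemma S2_eq (t : ℕ) : {s : EVar t →₀ ℕ | ∃ i j, i < j ∧ s = u2 i j}
    = (fun p : Fin t × Fin t => u2 p.1 p.2) '' {p | p.1 < p.2} := by
  ext s
  constructor
  · rintro ⟨i, j, hij, rfl⟩; exact ⟨(i, j), hij, rfl⟩
  · rintro ⟨⟨i, j⟩, hp, rfl⟩; exact ⟨i, j, hp, rfl⟩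

lemma S3_eq (t : ℕ) : {s : EVar t →₀ ℕ | ∃ i, s = u3 i}
    = u3 '' (Set.univ : Set (Fin t)) := by
  ext s
  constructor
  · rintro ⟨i, rfl⟩; exact ⟨i, trivial, rfl⟩
  · rintro ⟨i, -, rfl⟩; exact ⟨i, rfl⟩

lemma card_tri (t : ℕ) :
    (Finset.univ.filter fun p : Fin t × Fin t => p.2 < p.1).card +
      (Finset.univ.filter fun p : Fin t × Fin t => p.1 < p.2).card + t = t ^ 2 := by
  classical
  have h1 := Finset.card_filter_add_card_filter_not
    (s := (Finset.univ : Finset (Fin t × Fin t))) (p := fun p => p.2 < p.1)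
  have h2 : (Finset.univ.filter fun p : Fin t × Fin t => ¬ p.2 < p.1)
      = (Finset.univ.filter fun p : Fin t × Fin t => p.1 < p.2) ∪
        (Finset.univ.filter fun p : Fin t × Fin t => p.1 = p.2) := by
    ext ⟨x, y⟩
    simp only [Finset.mem_filter, Finset.mem_union, Finset.mem_univ, true_and,
      Fin.lt_def, Fin.ext_iff]
    omega
  have hdisj : Disjoint (Finset.univ.filter fun p : Fin t × Fin t => p.1 < p.2)
      (Finset.univ.filter fun p : Fin t × Fin t => p.1 = p.2) := by
    rw [Finset.disjoint_left]
    intro ⟨x, y⟩ hx hy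
    simp only [Finset.mem_filter, Fin.lt_def, Fin.ext_iff] at hx hy
    omega
  have h3 := Finset.card_union_of_disjoint hdisj
  have h2' := congrArg Finset.card h2
  rw [h3] at h2' 
  have h4 : (Finset.univ.filter fun p : Fin t × Fin t => p.1 = p.2).card = t := by
    have : (Finset.univ.filter fun p : Fin t × Fin t => p.1 = p.2)
        = Finset.univ.image (fun i : Fin t => (i, i)) := by
      ext ⟨x, y⟩
      simp [eq_comm, Prod.ext_iff]
    rw [this, Finset.card_image_of_injective _ (fun a b hab => (Prod.mk.injEq _ _ _ _ ▸ hab).1),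
      Finset.card_univ, Fintype.card_fin]
  have h5 : (Finset.univ : Finset (Fin t × Fin t)).card = t ^ 2 := by
    simp [Fintype.card_prod, sq]
  omega

lemma ncard_USet (t : ℕ) : (USet t).ncard = t ^ 2 := by
  classical
  have hd1 : Disjoint ({s : EVar t →₀ ℕ | ∃ i j, j < i ∧ s = u1 i j})
      {s : EVar t →₀ ℕ | ∃ i j, i < j ∧ s = u2 i j} := by
    rw [Set.disjoint_left]
    rintro s ⟨i, j, hji, rfl⟩ ⟨i', j', hij', heq⟩
    have := DFunLike.congr_fun heq (EVar.f 0)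
    rw [u1_f, u2_f0] at this
    omega
  have hd2 : Disjoint ({s : EVar t →₀ ℕ | ∃ i j, j < i ∧ s = u1 i j} ∪
      {s : EVar t →₀ ℕ | ∃ i j, i < j ∧ s = u2 i j})
      {s : EVar t →₀ ℕ | ∃ i, s = u3 i} := by
    rw [Set.disjoint_left]
    rintro s (⟨i, j, hji, rfl⟩ | ⟨i, j, hij, rfl⟩) ⟨k, heq⟩
    · have := DFunLike.congr_fun heq (EVar.f 0)
      rw [u1_f, u3_f0] at this
      omega
    · have := DFunLike.congr_fun heq (EVar.a k)
      rw [u2_a, u3_a, if_pos rfl] at this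
      by_cases h1 : i = k <;> by_cases h2 : j = k
      · exact absurd (h1.trans h2.symm) (ne_of_lt hij)
      · simp [h1, h2] at this
      · simp [h1, h2] at this
      · simp [h1, h2] at this
  have hf1 : ({s : EVar t →₀ ℕ | ∃ i j, j < i ∧ s = u1 i j}).Finite := by
    rw [S1_eq]; exact (Set.toFinite _).image _
  have hf2 : ({s : EVar t →₀ ℕ | ∃ i j, i < j ∧ s = u2 i j}).Finite := by
    rw [S2_eq]; exact (Set.toFinite _).image _
  have hf3 : ({s : EVar t →₀ ℕ | ∃ i, s = u3 i}).Finite := by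
    rw [S3_eq]; exact (Set.toFinite _).image _
  rw [USet, Set.ncard_union_eq hd2 (hf1.union hf2) hf3,
    Set.ncard_union_eq hd1 hf1 hf2]
  rw [S1_eq, S2_eq, S3_eq]
  rw [Set.ncard_image_of_injOn (u1_inj.injOn), Set.ncard_image_of_injOn u2_injOn,
    Set.ncard_image_of_injOn (u3_inj.injOn)]
  have e1 : {p : Fin t × Fin t | p.2 < p.1}
      = ↑(Finset.univ.filter fun p : Fin t × Fin t => p.2 < p.1) := by ext p; simp
  have e2 : {p : Fin t × Fin t | p.1 < p.2}
      = ↑(Finset.univ.filter fun p : Fin t × Fin t => p.1 < p.2) := by ext p; simp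
  rw [e1, e2, Set.ncard_coe_finset, Set.ncard_coe_finset, Set.ncard_univ]
  have := card_tri t
  simp only [Nat.card_eq_fintype_card, Fintype.card_fin]
  omega

lemma ncard_M (t : ℕ) : (M1Set K t ∪ M2Set K t ∪ M3Set K t).ncard = t ^ 2 := by
  rw [MUnion_eq, Set.ncard_image_of_injective _ (monomial_one_injective K t), ncard_USet]

end Aux

/-- Corollary 3.6. For `t ≥ 2`, with respect to the graded
reverse lexicographic order with
`a₁ > ⋯ > a_t > f₁ > f₂ > f₃ > e₁ > e₂ > e₃ > b₁ > ⋯ > b_t`, the initial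
ideal of `I_{G_t}` is generated by the monomials
`a_i b_j` (`j < i`), `a_i a_j f₁ f₃ e₂` (`i < j`) and `a_i² f₁ f₃ e₂`, and
these `t²` monomials form a minimal generating set. -/
theorem statement8 (K : Type) [Field K] (t : ℕ) (ht : 2 ≤ t)
    (m : MonomialOrder (EVar t)) (hm : IsGrevlex t m) :
    initialIdeal K m (toricGt K t) =
      Ideal.span (M1Set K t ∪ M2Set K t ∪ M3Set K t) ∧
    (M1Set K t ∪ M2Set K t ∪ M3Set K t).ncard = t ^ 2 ∧
    ∀ g ∈ M1Set K t ∪ M2Set K t ∪ M3Set K t,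
      g ∉ Ideal.span ((M1Set K t ∪ M2Set K t ∪ M3Set K t) \ {g}) := by
  exact ⟨initial_eq K t m hm, ncard_M K t, minimal_gen K t⟩

end ToricPaper
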